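/- Let (v_n)_{n≥0} be a real sequence with v_0 = 1, let (ε_k)_{k≥1} be the associated coefficient sequence, and let K ≥ 1. Then the following are equivalent: (a) for every n > K, Σ_{k=1}^{K} ε_k · n!/(n−k)! = v_{n-1} (i.e. the generalized derivation operator D_v is a differential operator of order at most K); (b) ε_k = 0 for all k ≥ K+1. -/

import Mathlib

open Polynomial Finset

/-- The generalized derivation operator `D_v` acting on real polynomials:
`D_v p (x) = ∑_{k ≥ 1} ε_k x^{k-1} p^{(k)}(x)` (a finite sum on each polynomial). -/
noncomputable def Dv (ε : ℕ → ℝ) (p : Polynomial ℝ) : Polynomial ℝ :=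
  ∑ k ∈ Finset.Icc 1 p.natDegree, C (ε k) * X ^ (k - 1) * derivative^[k] p

theorem stmt_4 (v : ℕ → ℝ) (hv0 : v 0 = 1) (K : ℕ) (hK : 1 ≤ K) (ε : ℕ → ℝ)
    (hε1 : ε 1 = 1)
    (hεk : ∀ k : ℕ, 2 ≤ k →
      ε k = v (k - 1) / (Nat.factorial k : ℝ)
        - ∑ j ∈ Finset.Icc 1 (k - 1), ε j / (Nat.factorial (k - j) : ℝ)) :
    (∀ n : ℕ, K < n →
        ∑ k ∈ Finset.Icc 1 K, ε k * (Nat.descFactorial n k : ℝ) = v (n - 1)) ↔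
      (∀ k : ℕ, K + 1 ≤ k → ε k = 0) := by
  -- Key identity: v (n-1) = ∑_{j=1}^n ε j * descFactorial n j for n ≥ 1.
  have key : ∀ n : ℕ, 1 ≤ n →
      v (n - 1) = ∑ j ∈ Finset.Icc 1 n, ε j * (Nat.descFactorial n j : ℝ) := by
    intro n hn
    rcases eq_or_lt_of_le hn with h1 | h2
    · subst h1
      simp [hv0, hε1]
    · have h2 : (2 : ℕ) ≤ n := h2
      have hfac : (Nat.factorial n : ℝ) ≠ 0 := by positivity
      have heq := hεk n h2
      have hsplit : Finset.Icc 1 n = insert n (Finset.Icc 1 (n - 1)) := by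
        ext x; simp only [Finset.mem_insert, Finset.mem_Icc]; omega
      have hsum : ∑ j ∈ Finset.Icc 1 (n - 1), ε j * (Nat.descFactorial n j : ℝ)
          = (Nat.factorial n : ℝ) *
            ∑ j ∈ Finset.Icc 1 (n - 1), ε j / (Nat.factorial (n - j) : ℝ) := by
        rw [Finset.mul_sum]
        refine Finset.sum_congr rfl fun j hj => ?_
        simp only [Finset.mem_Icc] at hj
        have hjn : j ≤ n := by omega
        have hnj : (Nat.factorial (n - j) : ℝ) ≠ 0 := by positivity
        have hd : (Nat.descFactorial n j : ℝ)
            = (Nat.factorial n : ℝ) / (Nat.factorial (n - j) : ℝ) := by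
          rw [eq_div_iff hnj, mul_comm, ← Nat.cast_mul,
            Nat.factorial_mul_descFactorial hjn]
        rw [hd]; ring
      rw [hsplit, Finset.sum_insert (by simp only [Finset.mem_Icc]; omega),
        Nat.descFactorial_self, hsum, heq]
      field_simp
      ring
  have hunion : ∀ n : ℕ, K ≤ n →
      Finset.Icc 1 n = Finset.Icc 1 K ∪ Finset.Ioc K n := by
    intro n hn; ext x
    simp only [Finset.mem_union, Finset.mem_Icc, Finset.mem_Ioc]; omega
  have hdisj : ∀ n : ℕ, Disjoint (Finset.Icc 1 K) (Finset.Ioc K n) := by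
    intro n
    rw [Finset.disjoint_left]; intro a ha hb
    simp only [Finset.mem_Icc, Finset.mem_Ioc] at ha hb; omega
  constructor
  · intro H k hk
    induction k using Nat.strong_induction_on with
    | _ k ih =>
      have hKk : K < k := hk
      have h1 := H k hKk
      rw [key k (by omega), hunion k hKk.le, Finset.sum_union (hdisj k)] at h1
      have hz : ∑ j ∈ Finset.Ioc K k, ε j * (Nat.descFactorial k j : ℝ) = 0 := by
        linarith
      have hsplit2 : Finset.Ioc K k = insert k (Finset.Ioc K (k - 1)) := by
        ext x; simp only [Finset.mem_insert, Finset.mem_Ioc]; omega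
      rw [hsplit2, Finset.sum_insert (by simp only [Finset.mem_Ioc]; omega),
        Nat.descFactorial_self] at hz
      have hrest : ∑ j ∈ Finset.Ioc K (k - 1), ε j * (Nat.descFactorial k j : ℝ) = 0 :=
        Finset.sum_eq_zero fun j hj => by
          simp only [Finset.mem_Ioc] at hj
          rw [ih j (by omega) (by omega)]; ring
      rw [hrest, add_zero] at hz
      have hfac : (Nat.factorial k : ℝ) ≠ 0 := by positivity
      exact (mul_eq_zero.mp hz).resolve_right hfac
  · intro H n hn
    have hz : ∑ j ∈ Finset.Ioc K n, ε j * (Nat.descFactorial n j : ℝ) = 0 :=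
      Finset.sum_eq_zero fun j hj => by
        simp only [Finset.mem_Ioc] at hj
        rw [H j (by omega)]; ring
    rw [key n (by omega), hunion n hn.le, Finset.sum_union (hdisj n), hz, add_zero]
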